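/- Boundedness of the normalized total variance score τ: let X be a measurable random vector in ℝ^d on a probability space such that almost surely every coordinate satisfies 0 ≤ X_i ≤ 1 and Σ_{i=1}^d X_i = 1 (i.e., X takes values in the probability simplex), let μ = E[X] and Σ its covariance matrix, and assume ‖μ‖₂² = Σ_{i=1}^d μ_i² < 1. Then the normalized total variance τ(X) = (tr Σ)/(1 − ‖μ‖₂²) satisfies 0 ≤ τ(X) ≤ 1. -/

import Mathlib

open MeasureTheory ProbabilityTheory

/-- Boundedness of the normalized total variance score `τ`: if `X` is a random
vector in `ℝ^d` taking values (almost surely) in the probability simplex, with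
mean `μ` satisfying `‖μ‖₂² = ∑ i, μ i ^ 2 < 1`, then
`τ(X) = (tr Σ) / (1 − ‖μ‖₂²) = (∑ i, Var(X i)) / (1 − ∑ i, μ i ^ 2)`
satisfies `0 ≤ τ(X) ≤ 1`. -/
theorem tau_mem_Icc
    {Ω : Type*} [MeasureSpace Ω] [IsProbabilityMeasure (ℙ : Measure Ω)]
    {d : ℕ} (X : Ω → Fin d → ℝ) (hX : Measurable X)
    (hsimplex : ∀ᵐ ω ∂ℙ, (∀ i, X ω i ∈ Set.Icc (0 : ℝ) 1) ∧ ∑ i, X ω i = 1)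
    (hμ : ∑ i, (∫ ω, X ω i ∂ℙ) ^ 2 < 1) :
    0 ≤ (∑ i, Var[fun ω => X ω i]) / (1 - ∑ i, (∫ ω, X ω i ∂ℙ) ^ 2) ∧
      (∑ i, Var[fun ω => X ω i]) / (1 - ∑ i, (∫ ω, X ω i ∂ℙ) ^ 2) ≤ 1 := by
  have hden : (0:ℝ) < 1 - ∑ i, (∫ ω, X ω i ∂ℙ) ^ 2 := by linarith
  have hXi : ∀ i, Measurable fun ω => X ω i := fun i => (measurable_pi_apply i).comp hX
  have hbd : ∀ i, ∀ᵐ ω ∂ℙ, ‖X ω i‖ ≤ 1 := by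
    intro i
    filter_upwards [hsimplex] with ω hω
    have := hω.1 i
    rw [Real.norm_eq_abs, abs_le]
    exact ⟨by linarith [this.1], this.2⟩
  have hL2 : ∀ i, MemLp (fun ω => X ω i) 2 ℙ := fun i =>
    MemLp.of_bound (hXi i).aestronglyMeasurable 1 (hbd i)
  have hL1 : ∀ i, Integrable (fun ω => X ω i) ℙ := fun i =>
    (hL2 i).integrable (by norm_num)
  have hL1sq : ∀ i, Integrable (fun ω => X ω i ^ 2) ℙ := by
    intro i
    have := (hL2 i).integrable_sq
    simpa using this
  -- Var ≤ μ_i - μ_i²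
  have hvar_le : ∀ i, Var[fun ω => X ω i] ≤ (∫ ω, X ω i ∂ℙ) - (∫ ω, X ω i ∂ℙ) ^ 2 := by
    intro i
    rw [variance_eq_sub (hL2 i)]
    have hle : ∫ ω, X ω i ^ 2 ∂ℙ ≤ ∫ ω, X ω i ∂ℙ := by
      refine integral_mono_ae (hL1sq i) (hL1 i) ?_
      filter_upwards [hsimplex] with ω hω
      have h := hω.1 i
      nlinarith [h.1, h.2]
    simpa using sub_le_sub_right hle ((∫ ω, X ω i ∂ℙ) ^ 2)
  have hsum_mean : ∑ i, ∫ ω, X ω i ∂ℙ = 1 := by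
    rw [← integral_finset_sum _ fun i _ => hL1 i]
    rw [integral_congr_ae (g := fun _ => (1:ℝ)) (by filter_upwards [hsimplex] with ω hω using hω.2)]
    simp
  have hnum_le : ∑ i, Var[fun ω => X ω i] ≤ 1 - ∑ i, (∫ ω, X ω i ∂ℙ) ^ 2 := by
    calc ∑ i, Var[fun ω => X ω i]
        ≤ ∑ i, ((∫ ω, X ω i ∂ℙ) - (∫ ω, X ω i ∂ℙ) ^ 2) :=
          Finset.sum_le_sum fun i _ => hvar_le i
      _ = 1 - ∑ i, (∫ ω, X ω i ∂ℙ) ^ 2 := by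
          rw [Finset.sum_sub_distrib, hsum_mean]
  constructor
  · exact div_nonneg (Finset.sum_nonneg fun i _ => variance_nonneg _ _) hden.le
  · rw [div_le_one hden]
    exact hnum_le
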